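/- Let n ≥ 1 be an integer and q a nonzero complex number. Let R denote the Laurent polynomial ring ℂ[x₁^{±1}, …, xₙ^{±1}] (i.e. the monoid algebra of the group ℤⁿ over ℂ), and let I ⊆ R be the ideal generated by the n elements x_i − q · (x₁ x₂ ⋯ xₙ)^{−1} for i = 1, …, n (the logarithmic partial derivatives x_i ∂W_q/∂x_i of the mirror potential W_q = x₁ + ⋯ + xₙ + q/(x₁⋯xₙ) of ℙⁿ). Then there is an isomorphism of rings R / I ≅ ℂ[T] / (T^{n+1} − q). -/

import Mathlib

open Polynomial


/-- The Laurent polynomial ring `ℂ[x₁^{±1},…,xₙ^{±1}]`, realized as the monoid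
algebra of the group `ℤⁿ` over `ℂ`. -/
abbrev LaurentRing (n : ℕ) : Type := AddMonoidAlgebra ℂ (Fin n → ℤ)

/-- The `i`-th logarithmic partial derivative `xᵢ ∂W_q/∂xᵢ = xᵢ − q (x₁⋯xₙ)^{−1}`
of the mirror potential `W_q = x₁ + ⋯ + xₙ + q/(x₁⋯xₙ)` of `ℙⁿ`. -/
noncomputable def jacobiGenerator (n : ℕ) (q : ℂ) (i : Fin n) : LaurentRing n :=
  AddMonoidAlgebra.single (Pi.single i (1 : ℤ)) (1 : ℂ) -
    AddMonoidAlgebra.single (fun _ => (-1 : ℤ)) q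

namespace JacobiPn

variable (n : ℕ) (q : ℂ)

/-- The target ring `ℂ[T]/(T^(n+1) - q)`. -/
noncomputable abbrev QR : Type :=
  Polynomial ℂ ⧸ Ideal.span {Polynomial.X ^ (n + 1) - Polynomial.C q}

lemma mkQ_pow :
    Ideal.Quotient.mk (Ideal.span {X ^ (n + 1) - C q}) (X ^ (n + 1)) =
      Ideal.Quotient.mk _ (C q) := by
  rw [Ideal.Quotient.eq]
  exact Ideal.subset_span rfl

/-- The class of `T` as a unit of `ℂ[T]/(T^(n+1)-q)`. -/
noncomputable def uQ (hq : q ≠ 0) : (QR n q)ˣ where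
  val := Ideal.Quotient.mk _ X
  inv := Ideal.Quotient.mk _ (C q⁻¹ * X ^ n)
  val_inv := by
    rw [← map_mul]
    have h : (X : ℂ[X]) * (C q⁻¹ * X ^ n) = C q⁻¹ * X ^ (n + 1) := by ring
    rw [h, map_mul, mkQ_pow, ← map_mul, ← C_mul, inv_mul_cancel₀ hq, map_one, map_one]
  inv_val := by
    rw [← map_mul]
    have h : (C q⁻¹ * X ^ n) * (X : ℂ[X]) = C q⁻¹ * X ^ (n + 1) := by ring
    rw [h, map_mul, mkQ_pow, ← map_mul, ← C_mul, inv_mul_cancel₀ hq, map_one, map_one]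

lemma uQ_val (hq : q ≠ 0) : ((uQ n q hq : (QR n q)ˣ) : QR n q) = Ideal.Quotient.mk _ X := rfl

/-- Summing the coordinates, as an additive monoid hom. -/
def sumHom : (Fin n → ℤ) →+ ℤ where
  toFun a := ∑ i, a i
  map_zero' := by simp
  map_add' a b := by simp [Finset.sum_add_distrib]

@[simp] lemma sumHom_apply (a : Fin n → ℤ) : sumHom n a = ∑ i, a i := rfl

/-- The forward map `ℂ[x₁^±,…,xₙ^±] → ℂ[T]/(T^(n+1)-q)`, sending a monomial
of multidegree `a` to `T^(∑ a)`. -/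
noncomputable def Fhom (hq : q ≠ 0) : LaurentRing n →ₐ[ℂ] QR n q :=
  AddMonoidAlgebra.lift ℂ (QR n q) (Fin n → ℤ) <|
    (Units.coeHom _).comp
      ((zpowersHom _ (uQ n q hq)).comp (AddMonoidHom.toMultiplicative (sumHom n)))

lemma Fhom_single (hq : q ≠ 0) (a : Fin n → ℤ) (c : ℂ) :
    Fhom n q hq (AddMonoidAlgebra.single a c) =
      c • ((uQ n q hq ^ (∑ i, a i) : (QR n q)ˣ) : QR n q) := by
  unfold Fhom
  rw [AddMonoidAlgebra.lift_single]
  rfl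

lemma uQ_pow_succ (hq : q ≠ 0) :
    ((uQ n q hq : (QR n q)ˣ) : QR n q) ^ (n + 1) = algebraMap ℂ (QR n q) q := by
  rw [uQ_val, ← map_pow, mkQ_pow]
  rfl

end JacobiPn

namespace JacobiPn

lemma Fhom_gen (n : ℕ) (q : ℂ) (hq : q ≠ 0) (i : Fin n) :
    Fhom n q hq (jacobiGenerator n q i) = 0 := by
  have hs1 : (∑ j, Pi.single i (1 : ℤ) j) = 1 := by simp
  have hs2 : (∑ _j : Fin n, (-1 : ℤ)) = -(n : ℤ) := by simp
  rw [jacobiGenerator, map_sub, Fhom_single, Fhom_single, hs1, hs2, one_smul, sub_eq_zero]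
  set u : (QR n q)ˣ := uQ n q hq with hu
  have key : ((u : QR n q)) * ((u ^ n : (QR n q)ˣ) : QR n q) = q • (1 : QR n q) := by
    rw [Units.val_pow_eq_pow_val, ← pow_succ', uQ_pow_succ n q hq,
      ← Ideal.Quotient.mk_algebraMap, Polynomial.algebraMap_eq,
      show (1 : QR n q) = Ideal.Quotient.mkₐ ℂ (Ideal.span {X ^ (n + 1) - C q}) (1 : ℂ[X]) from
        (map_one _).symm,
      ← map_smul, Ideal.Quotient.mkₐ_eq_mk]
    congr 1
    simp [Algebra.smul_def]
  have hz : u ^ (-(n : ℤ)) = (u ^ n)⁻¹ := by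
    rw [zpow_neg, zpow_natCast]
  rw [hz, zpow_one]
  calc (u : QR n q)
      = (q • (1 : QR n q)) * ((u ^ n)⁻¹ : (QR n q)ˣ) := by
        rw [← key, mul_assoc, ← Units.val_mul, mul_inv_cancel, Units.val_one, mul_one]
    _ = q • (((u ^ n)⁻¹ : (QR n q)ˣ) : QR n q) := by
        rw [smul_mul_assoc, one_mul]

end JacobiPn

namespace JacobiPn

variable (n : ℕ) (q : ℂ)

noncomputable abbrev Ispan : Ideal (LaurentRing n) :=
  Ideal.span (Set.range (jacobiGenerator n q))

lemma gen_mem (i : Fin n) : jacobiGenerator n q i ∈ Ispan n q :=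
  Ideal.subset_span ⟨i, rfl⟩

/-- All the variables `xᵢ` have the same class mod the Jacobi ideal. -/
lemma mk_single_eq (i j : Fin n) :
    Ideal.Quotient.mk (Ispan n q) (AddMonoidAlgebra.single (Pi.single i (1 : ℤ)) (1 : ℂ)) =
      Ideal.Quotient.mk (Ispan n q) (AddMonoidAlgebra.single (Pi.single j (1 : ℤ)) (1 : ℂ)) := by
  rw [Ideal.Quotient.eq]
  have h : AddMonoidAlgebra.single (Pi.single i (1 : ℤ)) (1 : ℂ) -
      AddMonoidAlgebra.single (Pi.single j (1 : ℤ)) (1 : ℂ) =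
      jacobiGenerator n q i - jacobiGenerator n q j := by
    rw [jacobiGenerator, jacobiGenerator, sub_sub_sub_cancel_right]
  rw [h]
  exact sub_mem (gen_mem n q i) (gen_mem n q j)

variable (hn : 1 ≤ n)

/-- The class of `x₁` in the Jacobi ring. -/
noncomputable def zEl : LaurentRing n ⧸ Ispan n q :=
  Ideal.Quotient.mk _ (AddMonoidAlgebra.single (Pi.single (⟨0, hn⟩ : Fin n) (1 : ℤ)) (1 : ℂ))

lemma zEl_pow_n : zEl n q hn ^ n =
    Ideal.Quotient.mk (Ispan n q) (AddMonoidAlgebra.single (fun _ => (1 : ℤ)) (1 : ℂ)) := by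
  have h1 : zEl n q hn ^ n =
      ∏ i : Fin n, Ideal.Quotient.mk (Ispan n q)
        (AddMonoidAlgebra.single (Pi.single i (1 : ℤ)) (1 : ℂ)) := by
    rw [Finset.prod_congr rfl fun i _ => mk_single_eq n q i ⟨0, hn⟩]
    rw [Finset.prod_const, Finset.card_univ, Fintype.card_fin]
    rfl
  rw [h1, ← map_prod, AddMonoidAlgebra.prod_single]
  have hsum : (∑ i : Fin n, Pi.single i (1 : ℤ)) = fun _ => (1 : ℤ) := by
    funext j
    rw [Finset.sum_apply]
    simp
  rw [hsum, Finset.prod_const_one]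

lemma zEl_pow_succ : zEl n q hn ^ (n + 1) = algebraMap ℂ (LaurentRing n ⧸ Ispan n q) q := by
  rw [pow_succ, zEl_pow_n, zEl, ← map_mul, AddMonoidAlgebra.single_mul_single, one_mul]
  have hcalc : AddMonoidAlgebra.single ((fun _ => (1 : ℤ)) + Pi.single (⟨0, hn⟩ : Fin n) 1) (1 : ℂ) -
      AddMonoidAlgebra.single (0 : Fin n → ℤ) q =
      AddMonoidAlgebra.single (fun _ => (1 : ℤ)) (1 : ℂ) * jacobiGenerator n q ⟨0, hn⟩ := by
    rw [jacobiGenerator, mul_sub, AddMonoidAlgebra.single_mul_single,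
      AddMonoidAlgebra.single_mul_single, one_mul, one_mul]
    have h0 : ((fun _ => (1 : ℤ)) + fun _ => (-1 : ℤ)) = (0 : Fin n → ℤ) := by
      funext j
      simp
    rw [h0]
  have hmem : AddMonoidAlgebra.single ((fun _ => (1 : ℤ)) + Pi.single (⟨0, hn⟩ : Fin n) 1) (1 : ℂ) -
      AddMonoidAlgebra.single (0 : Fin n → ℤ) q ∈ Ispan n q := by
    rw [hcalc]
    exact Ideal.mul_mem_left _ _ (gen_mem n q _)
  rw [Ideal.Quotient.eq.mpr hmem,
    show AddMonoidAlgebra.single (0 : Fin n → ℤ) q = algebraMap ℂ (LaurentRing n) q from rfl,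
    Ideal.Quotient.mk_algebraMap]

end JacobiPn

namespace JacobiPn

variable (n : ℕ) (q : ℂ)

/-- The monomial `x^a` as a unit of the Laurent ring. -/
noncomputable def laurentUnit (a : Fin n → ℤ) : (LaurentRing n)ˣ where
  val := AddMonoidAlgebra.single a 1
  inv := AddMonoidAlgebra.single (-a) 1
  val_inv := by
    rw [AddMonoidAlgebra.single_mul_single]
    simp [AddMonoidAlgebra.one_def]
  inv_val := by
    rw [AddMonoidAlgebra.single_mul_single]
    simp [AddMonoidAlgebra.one_def]

lemma laurentUnit_zero : laurentUnit n 0 = 1 :=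
  Units.ext (by simp [laurentUnit, AddMonoidAlgebra.one_def])

lemma laurentUnit_add (a b : Fin n → ℤ) :
    laurentUnit n (a + b) = laurentUnit n a * laurentUnit n b :=
  Units.ext (by simp [laurentUnit, AddMonoidAlgebra.single_mul_single])

/-- The class of `x^a` as a unit of the Jacobi ring, additively. -/
noncomputable def tHom : (Fin n → ℤ) →+ Additive ((LaurentRing n ⧸ Ispan n q)ˣ) where
  toFun a := Additive.ofMul
    (Units.map (Ideal.Quotient.mk (Ispan n q)).toMonoidHom (laurentUnit n a))
  map_zero' := by rw [laurentUnit_zero, map_one]; rfl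
  map_add' a b := by rw [laurentUnit_add, map_mul]; rfl

/-- The class of `x₁` as a unit of the Jacobi ring. -/
noncomputable def wUnit (hn : 1 ≤ n) : ((LaurentRing n ⧸ Ispan n q)ˣ) :=
  Units.map (Ideal.Quotient.mk (Ispan n q)).toMonoidHom
    (laurentUnit n (Pi.single (⟨0, hn⟩ : Fin n) (1 : ℤ)))

lemma wUnit_val (hn : 1 ≤ n) : ((wUnit n q hn : (LaurentRing n ⧸ Ispan n q)ˣ) :
    LaurentRing n ⧸ Ispan n q) = zEl n q hn := rfl

lemma tHom_eq (hn : 1 ≤ n) :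
    tHom n q = (zmultiplesHom _ (Additive.ofMul (wUnit n q hn))).comp (sumHom n) := by
  refine AddMonoidHom.functions_ext (M := fun _ : Fin n => ℤ)
    (Additive ((LaurentRing n ⧸ Ispan n q)ˣ)) _ _ fun i x => ?_
  have hx : Pi.single i x = x • (Pi.single i (1 : ℤ) : Fin n → ℤ) := by
    funext j
    simp [Pi.single_apply, mul_ite]
  rw [hx, map_zsmul, map_zsmul]
  congr 1
  have h2 : ((zmultiplesHom _ (Additive.ofMul (wUnit n q hn))).comp (sumHom n))
      (Pi.single i (1 : ℤ)) = Additive.ofMul (wUnit n q hn) := by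
    simp [zmultiplesHom_apply]
  rw [h2]
  show Additive.ofMul
      (Units.map (Ideal.Quotient.mk (Ispan n q)).toMonoidHom (laurentUnit n (Pi.single i 1))) = _
  rw [wUnit]
  congr 1
  apply Units.ext
  exact mk_single_eq n q i ⟨0, hn⟩

lemma mk_single_one (hn : 1 ≤ n) (a : Fin n → ℤ) :
    Ideal.Quotient.mk (Ispan n q) (AddMonoidAlgebra.single a (1 : ℂ)) =
      ((wUnit n q hn ^ (∑ i, a i) : (LaurentRing n ⧸ Ispan n q)ˣ) :
        LaurentRing n ⧸ Ispan n q) := by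
  have h1 : Ideal.Quotient.mk (Ispan n q) (AddMonoidAlgebra.single a (1 : ℂ)) =
      ((Additive.toMul (tHom n q a) : (LaurentRing n ⧸ Ispan n q)ˣ) :
        LaurentRing n ⧸ Ispan n q) := rfl
  rw [h1, tHom_eq n q hn]
  rfl

end JacobiPn

namespace JacobiPn

variable (n : ℕ) (q : ℂ)

noncomputable def Fbar (hq : q ≠ 0) : (LaurentRing n ⧸ Ispan n q) →ₐ[ℂ] QR n q :=
  Ideal.Quotient.liftₐ (Ispan n q) (Fhom n q hq) (fun a ha => by
    have hle : Ispan n q ≤ RingHom.ker (Fhom n q hq).toRingHom := by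
      rw [Ideal.span_le]
      rintro _ ⟨i, rfl⟩
      exact Fhom_gen n q hq i
    exact RingHom.mem_ker.mp (hle ha))

lemma Fbar_mk (hq : q ≠ 0) (x : LaurentRing n) :
    Fbar n q hq (Ideal.Quotient.mk _ x) = Fhom n q hq x := by
  rw [Fbar, Ideal.Quotient.liftₐ_apply]
  rfl

noncomputable def Gbar (hn : 1 ≤ n) : QR n q →ₐ[ℂ] (LaurentRing n ⧸ Ispan n q) :=
  Ideal.Quotient.liftₐ _ (Polynomial.aeval (zEl n q hn)) (fun p hp => by
    have hle : Ideal.span {X ^ (n + 1) - C q} ≤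
        RingHom.ker (Polynomial.aeval (zEl n q hn)).toRingHom := by
      rw [Ideal.span_le, Set.singleton_subset_iff]
      have h : Polynomial.aeval (zEl n q hn) (X ^ (n + 1) - C q) = 0 := by
        rw [map_sub, map_pow, Polynomial.aeval_X, Polynomial.aeval_C, zEl_pow_succ, sub_self]
      exact h
    exact RingHom.mem_ker.mp (hle hp))

lemma Gbar_mk (hn : 1 ≤ n) (p : ℂ[X]) :
    Gbar n q hn (Ideal.Quotient.mk _ p) = Polynomial.aeval (zEl n q hn) p := by
  rw [Gbar, Ideal.Quotient.liftₐ_apply]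
  rfl

lemma comp1 (hq : q ≠ 0) (hn : 1 ≤ n) :
    (Fbar n q hq).comp (Gbar n q hn) = AlgHom.id ℂ (QR n q) := by
  apply Ideal.Quotient.algHom_ext
  apply Polynomial.algHom_ext
  rw [AlgHom.comp_apply, AlgHom.comp_apply, AlgHom.comp_apply, AlgHom.id_apply,
    Ideal.Quotient.mkₐ_eq_mk, Gbar_mk, Polynomial.aeval_X, zEl, Fbar_mk, Fhom_single, one_smul]
  have hs : (∑ j, Pi.single (⟨0, hn⟩ : Fin n) (1 : ℤ) j) = 1 := by simp
  rw [hs, zpow_one, uQ_val]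

lemma comp2 (hq : q ≠ 0) (hn : 1 ≤ n) :
    (Gbar n q hn).comp (Fbar n q hq) = AlgHom.id ℂ (LaurentRing n ⧸ Ispan n q) := by
  apply Ideal.Quotient.algHom_ext
  apply AddMonoidAlgebra.algHom_ext
  intro a
  rw [AlgHom.comp_apply, AlgHom.comp_apply, AlgHom.comp_apply, AlgHom.id_apply,
    Ideal.Quotient.mkₐ_eq_mk, Fbar_mk, Fhom_single, one_smul]
  set Gm : QR n q →* (LaurentRing n ⧸ Ispan n q) :=
    (Gbar n q hn).toRingHom.toMonoidHom with hGm
  have hmap : ∀ v : (QR n q)ˣ, Gbar n q hn ((v : QR n q)) =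
      ((Units.map Gm v : (LaurentRing n ⧸ Ispan n q)ˣ) : LaurentRing n ⧸ Ispan n q) :=
    fun v => rfl
  rw [hmap, map_zpow]
  have huQ : Units.map Gm (uQ n q hq) = wUnit n q hn := by
    apply Units.ext
    show Gbar n q hn ((uQ n q hq : QR n q)) = _
    rw [uQ_val, Gbar_mk, Polynomial.aeval_X, wUnit_val]
  rw [huQ, mk_single_one n q hn a]
  exact Subsingleton.elim _ _

end JacobiPn

/-- for `n ≥ 1` and `q ≠ 0`, the Jacobi ring of the mirror
potential of `ℙⁿ`, i.e. `ℂ[x₁^{±1},…,xₙ^{±1}] / ⟨xᵢ − q(x₁⋯xₙ)^{−1} : i⟩`, is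
isomorphic as a ring to `ℂ[T]/(T^(n+1) − q)`. -/
theorem jacobi_ring_of_Pn_mirror (n : ℕ) (hn : 1 ≤ n) (q : ℂ) (hq : q ≠ 0) :
    Nonempty
      ((LaurentRing n ⧸ Ideal.span (Set.range (jacobiGenerator n q))) ≃+*
        (Polynomial ℂ ⧸ Ideal.span
          {Polynomial.X ^ (n + 1) - Polynomial.C q})) :=
  ⟨(AlgEquiv.ofAlgHom (JacobiPn.Fbar n q hq) (JacobiPn.Gbar n q hn)
      (JacobiPn.comp1 n q hq hn) (JacobiPn.comp2 n q hq hn)).toRingEquiv⟩
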